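/- arXiv:1703.03036 — 2 statements merged into one kernel-verified Lean document; each statement's English description precedes it below -/
import Mathlib

section
/- The group of pairs (T,P) with T ∈ GL_{m+2}(ℤ), P a (2m+2)×(2m+2) permutation matrix, generated by the vertex-permutation symmetries and the vertex-swapping symmetries of the Lauricella F_C matrix A, has order at least 2^m · m!. -/
/-- The Lauricella `F_C` matrix `A = [[1,𝟏,1,𝟏],[1,𝟏,0,𝟎],[𝟎,I_m,𝟎,−I_m]]` of size
`(m+2) × (2m+2)`; rows are indexed by `Fin 2 ⊕ Fin m` and columns by
`(Unit ⊕ Fin m) ⊕ (Unit ⊕ Fin m)`. -/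
def lauricellaFC (m : ℕ) : Matrix (Fin 2 ⊕ Fin m) ((Unit ⊕ Fin m) ⊕ (Unit ⊕ Fin m)) ℤ :=
  Matrix.of fun r c =>
    match r with
    | Sum.inl k =>
        if k = 0 then 1
        else
          match c with
          | Sum.inl _ => 1
          | Sum.inr _ => 0
    | Sum.inr i =>
        match c with
        | Sum.inl (Sum.inr j) => if i = j then 1 else 0
        | Sum.inr (Sum.inr j) => if i = j then -1 else 0
        | _ => 0

/-- The permutation matrix of `σ`, with columns `e_{σ(1)},…,e_{σ(n)}`. -/
def permMat {α : Type*} [DecidableEq α] (σ : Equiv.Perm α) : Matrix α α ℤ :=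
  Matrix.of fun i j => if i = σ j then 1 else 0

/-- The matrix `T_k ∈ ℤ^{(m+2)×(m+2)}` which equals the identity except that
`T_k e_2 = e_2 − e_{k+2}` and `T_k e_{k+2} = −e_{k+2}`. -/
def Tswap (m : ℕ) (k : Fin m) : Matrix (Fin 2 ⊕ Fin m) (Fin 2 ⊕ Fin m) ℤ :=
  Matrix.of fun r c =>
    match r, c with
    | Sum.inl i, Sum.inl j => if i = j then 1 else 0
    | Sum.inr i, Sum.inl j => if j = 1 ∧ i = k then -1 else 0
    | Sum.inl _, Sum.inr _ => 0
    | Sum.inr i, Sum.inr j => if i = j then (if i = k then -1 else 1) else 0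

/-- The vertex-permutation symmetry pairs `(diag(1,1,Q), diag(1,Q⁻¹,1,Q⁻¹))` of the
Lauricella `F_C` matrix. -/
def vertexPermPair (m : ℕ) (σ : Equiv.Perm (Fin m)) :
    Matrix (Fin 2 ⊕ Fin m) (Fin 2 ⊕ Fin m) ℤ ×
      Matrix ((Unit ⊕ Fin m) ⊕ (Unit ⊕ Fin m)) ((Unit ⊕ Fin m) ⊕ (Unit ⊕ Fin m)) ℤ :=
  (Matrix.fromBlocks (1 : Matrix (Fin 2) (Fin 2) ℤ) 0 0 (permMat σ),
    Matrix.fromBlocks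
      (Matrix.fromBlocks (1 : Matrix Unit Unit ℤ) 0 0 (permMat σ⁻¹)) 0 0
      (Matrix.fromBlocks (1 : Matrix Unit Unit ℤ) 0 0 (permMat σ⁻¹)))

/-- The vertex-swapping symmetry pairs `(T_k, P_k)` of the Lauricella `F_C`
matrix. -/
def vertexSwapPair (m : ℕ) (k : Fin m) :
    Matrix (Fin 2 ⊕ Fin m) (Fin 2 ⊕ Fin m) ℤ ×
      Matrix ((Unit ⊕ Fin m) ⊕ (Unit ⊕ Fin m)) ((Unit ⊕ Fin m) ⊕ (Unit ⊕ Fin m)) ℤ :=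
  (Tswap m k, permMat (Equiv.swap (Sum.inl (Sum.inr k)) (Sum.inr (Sum.inr k))))

open Matrix Equiv

/-- signed-permutation-with-column monoid element -/
def gMat (m : ℕ) (ε : Fin m → Bool) (σ : Equiv.Perm (Fin m)) :
    Matrix (Fin 2 ⊕ Fin m) (Fin 2 ⊕ Fin m) ℤ :=
  Matrix.of fun r c =>
    Sum.elim
      (fun i => Sum.elim (fun j => if i = j then (1:ℤ) else 0) (fun _ => 0) c)
      (fun i => Sum.elim (fun j => if j = 1 ∧ ε i then (-1:ℤ) else 0)
        (fun j => if i = σ j then (if ε i then (-1:ℤ) else 1) else 0) c) r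

lemma gMat_mul (m : ℕ) (ε ε' : Fin m → Bool) (σ σ' : Equiv.Perm (Fin m)) :
    gMat m ε σ * gMat m ε' σ' =
      gMat m (fun i => xor (ε i) (ε' (σ⁻¹ i))) (σ * σ') := by
  ext r c
  rw [Matrix.mul_apply, Fintype.sum_sum_type]
  cases r with
  | inl i =>
    cases c with
    | inl j =>
      simp [gMat, Fin.sum_univ_two]
    | inr j =>
      simp [gMat]
  | inr i =>
    cases c with
    | inl j =>
      simp only [gMat, Matrix.of_apply, Sum.elim_inl, Sum.elim_inr, Fin.sum_univ_two]
      have h2 : ∀ k : Fin m, (if i = σ k then (if ε i then (-1:ℤ) else 1) else 0) *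
          (if j = 1 ∧ ε' k then (-1:ℤ) else 0)
          = if σ⁻¹ i = k then (if ε i then (-1:ℤ) else 1) * (if j = 1 ∧ ε' k then (-1:ℤ) else 0) else 0 := by
        intro k
        by_cases h : i = σ k
        · simp [h]
        · have : ¬ σ⁻¹ i = k := fun hk => h (by simp [← hk])
          rw [if_neg h, if_neg this]; simp
      rw [Finset.sum_congr rfl fun k _ => h2 k]
      rw [show (∑ k : Fin m, if σ⁻¹ i = k then (if ε i then (-1:ℤ) else 1) * (if j = 1 ∧ ε' k then (-1:ℤ) else 0) else 0) = _ from Finset.sum_ite_eq _ _ _]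
      simp only [Finset.mem_univ, if_true]
      fin_cases j <;> by_cases h1 : ε i <;> by_cases h2 : ε' (σ.symm i) <;>
        simp [h1, h2]
    | inr j =>
      simp only [gMat, Matrix.of_apply, Sum.elim_inl, Sum.elim_inr, Fin.sum_univ_two]
      have h2 : ∀ k : Fin m, (if i = σ k then (if ε i then (-1:ℤ) else 1) else 0) *
          (if k = σ' j then (if ε' k then (-1:ℤ) else 1) else 0)
          = if k = σ' j then (if i = σ k then (if ε i then (-1:ℤ) else 1) else 0) * (if ε' k then (-1:ℤ) else 1) else 0 := by
        intro k; by_cases h : k = σ' j <;> simp [h]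
      rw [Finset.sum_congr rfl fun k _ => h2 k, Finset.sum_ite_eq' _ _ _]
      simp only [Finset.mem_univ, if_true]
      by_cases hi : i = σ (σ' j)
      · subst hi
        have hinv : σ⁻¹ (σ (σ' j)) = σ' j := by simp
        simp only [Equiv.Perm.mul_apply, hinv, if_true]
        by_cases h1 : ε (σ (σ' j)) <;> by_cases h2 : ε' (σ' j) <;> simp [h1, h2]
      · have : ¬ i = (σ * σ') j := hi
        simp [hi, this]

lemma gMat_one (m : ℕ) : gMat m (fun _ => false) 1 = 1 := by
  ext r c
  cases r <;> cases c <;>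
    simp [gMat, Matrix.one_apply]

lemma Tswap_eq (m : ℕ) (k : Fin m) :
    Tswap m k = gMat m (fun i => decide (i = k)) 1 := by
  ext r c
  cases r <;> cases c <;>
    simp [Tswap, gMat]

lemma vertexPermPair_fst (m : ℕ) (σ : Equiv.Perm (Fin m)) :
    (vertexPermPair m σ).1 = gMat m (fun _ => false) σ := by
  ext r c
  cases r <;> cases c <;>
    simp [vertexPermPair, gMat, Matrix.fromBlocks, Matrix.one_apply, permMat]

lemma gMat_injective (m : ℕ) {ε ε' : Fin m → Bool} {σ σ' : Equiv.Perm (Fin m)}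
    (h : gMat m ε σ = gMat m ε' σ') : ε = ε' ∧ σ = σ' := by
  constructor
  · funext i
    have := congrFun (congrFun h (Sum.inr i)) (Sum.inl 1)
    simp only [gMat, Matrix.of_apply, Sum.elim_inl, Sum.elim_inr, true_and, if_true] at this
    by_cases h1 : ε i <;> by_cases h2 : ε' i <;> simp_all
  · ext j
    have := congrFun (congrFun h (Sum.inr (σ j))) (Sum.inr j)
    simp only [gMat, Matrix.of_apply, Sum.elim_inr, if_true] at this
    by_cases hs : σ j = σ' j
    · exact congrArg Fin.val hs
    · exfalso
      simp only [hs, if_false, if_true] at this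
      by_cases h1 : ε (σ j) <;> simp [h1] at this

lemma permMat_one {α : Type*} [DecidableEq α] : permMat (1 : Equiv.Perm α) = 1 := by
  ext i j; simp [permMat, Matrix.one_apply]; exact if_congr Iff.rfl rfl rfl

lemma permMat_mul {α : Type*} [DecidableEq α] [Fintype α] (σ τ : Equiv.Perm α) :
    permMat σ * permMat τ = permMat (σ * τ) := by
  ext i j
  rw [Matrix.mul_apply]
  simp only [permMat, Matrix.of_apply]
  have h2 : ∀ k, (if i = σ k then (1:ℤ) else 0) * (if k = τ j then 1 else 0)
      = if k = τ j then (if i = σ k then (1:ℤ) else 0) else 0 := by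
    intro k; by_cases h : k = τ j <;> simp [h]
  rw [Finset.sum_congr rfl fun k _ => h2 k, Finset.sum_ite_eq' _ _ _]
  simp [permMat]; exact if_congr Iff.rfl rfl rfl

lemma permMat_sumCongr {α β : Type*} [DecidableEq α] [DecidableEq β]
    (σ : Equiv.Perm α) (τ : Equiv.Perm β) :
    Matrix.fromBlocks (permMat σ) 0 0 (permMat τ) = permMat (Equiv.sumCongr σ τ) := by
  ext i j
  cases i <;> cases j <;> simp [permMat, Matrix.fromBlocks]

lemma vertexPermPair_snd (m : ℕ) (σ : Equiv.Perm (Fin m)) :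
    (vertexPermPair m σ).2 = permMat (Equiv.sumCongr
      (Equiv.sumCongr (1 : Equiv.Perm Unit) σ⁻¹) (Equiv.sumCongr (1 : Equiv.Perm Unit) σ⁻¹)) := by
  have h1 : (Matrix.fromBlocks (1 : Matrix Unit Unit ℤ) 0 0 (permMat σ⁻¹))
      = permMat (Equiv.sumCongr (1 : Equiv.Perm Unit) σ⁻¹) := by
    rw [← permMat_sumCongr, permMat_one]
  rw [vertexPermPair]
  simp only [h1]
  rw [permMat_sumCongr]

/-- The finite monoid of "signed permutation plus column" matrices. -/
def G1 (m : ℕ) : Submonoid (Matrix (Fin 2 ⊕ Fin m) (Fin 2 ⊕ Fin m) ℤ) where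
  carrier := Set.range (fun p : (Fin m → Bool) × Equiv.Perm (Fin m) => gMat m p.1 p.2)
  mul_mem' := by
    rintro _ _ ⟨p, rfl⟩ ⟨q, rfl⟩
    exact ⟨⟨fun i => xor (p.1 i) (q.1 (p.2⁻¹ i)), p.2 * q.2⟩, (gMat_mul m p.1 q.1 p.2 q.2).symm⟩
  one_mem' := ⟨⟨fun _ => false, 1⟩, gMat_one m⟩

/-- The finite monoid of permutation matrices. -/
def G2 (m : ℕ) : Submonoid
    (Matrix ((Unit ⊕ Fin m) ⊕ (Unit ⊕ Fin m)) ((Unit ⊕ Fin m) ⊕ (Unit ⊕ Fin m)) ℤ) where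
  carrier := Set.range (permMat : Equiv.Perm ((Unit ⊕ Fin m) ⊕ (Unit ⊕ Fin m)) → _)
  mul_mem' := by
    rintro _ _ ⟨σ, rfl⟩ ⟨τ, rfl⟩
    exact ⟨σ * τ, (permMat_mul σ τ).symm⟩
  one_mem' := ⟨1, permMat_one⟩

lemma closure_le_prod (m : ℕ) :
    Submonoid.closure
        (Set.range (vertexPermPair m) ∪ Set.range (vertexSwapPair m)) ≤
      (G1 m).prod (G2 m) := by
  rw [Submonoid.closure_le]
  rintro x (⟨σ, rfl⟩ | ⟨k, rfl⟩)
  · refine ⟨⟨⟨fun _ => false, σ⟩, (vertexPermPair_fst m σ).symm⟩, ?_⟩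
    exact ⟨_, (vertexPermPair_snd m σ).symm⟩
  · refine ⟨⟨⟨fun i => decide (i = k), 1⟩, (Tswap_eq m k).symm⟩, ?_⟩
    exact ⟨_, rfl⟩

lemma closure_finite (m : ℕ) :
    (Submonoid.closure
        (Set.range (vertexPermPair m) ∪ Set.range (vertexSwapPair m)) :
      Set (Matrix (Fin 2 ⊕ Fin m) (Fin 2 ⊕ Fin m) ℤ ×
        Matrix ((Unit ⊕ Fin m) ⊕ (Unit ⊕ Fin m)) ((Unit ⊕ Fin m) ⊕ (Unit ⊕ Fin m)) ℤ)).Finite := by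
  have hfin : ((Set.range (fun p : (Fin m → Bool) × Equiv.Perm (Fin m) => gMat m p.1 p.2)) ×ˢ
      (Set.range (permMat : Equiv.Perm ((Unit ⊕ Fin m) ⊕ (Unit ⊕ Fin m)) → _))).Finite :=
    Set.Finite.prod (Set.finite_range _) (Set.finite_range _)
  apply Set.Finite.subset hfin (fun x hx => ?_)
  have := closure_le_prod m hx
  rw [Submonoid.mem_prod] at this
  exact ⟨this.1, this.2⟩

lemma exists_pair_mem (m : ℕ) (s : Finset (Fin m)) (σ : Equiv.Perm (Fin m)) :
    ∃ P, (gMat m (fun i => decide (i ∈ s)) σ, P) ∈ Submonoid.closure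
        (Set.range (vertexPermPair m) ∪ Set.range (vertexSwapPair m)) := by
  classical
  induction s using Finset.induction_on with
  | empty =>
    refine ⟨(vertexPermPair m σ).2, ?_⟩
    have hfun : (fun i : Fin m => decide (i ∈ (∅ : Finset (Fin m)))) = fun _ => false := by
      funext i; simp
    rw [hfun, ← vertexPermPair_fst m σ]
    exact Submonoid.subset_closure (Or.inl ⟨σ, rfl⟩)
  | @insert a s ha ih =>
    obtain ⟨P, hP⟩ := ih
    refine ⟨(vertexSwapPair m a).2 * P, ?_⟩
    have hmem := Submonoid.mul_mem _
      (Submonoid.subset_closure (s := Set.range (vertexPermPair m) ∪ Set.range (vertexSwapPair m))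
        (Or.inr ⟨a, rfl⟩)) hP
    have heq : vertexSwapPair m a * (gMat m (fun i => decide (i ∈ s)) σ, P)
        = (gMat m (fun i => decide (i ∈ insert a s)) σ, (vertexSwapPair m a).2 * P) := by
      have h1 : (vertexSwapPair m a).1 * gMat m (fun i => decide (i ∈ s)) σ
          = gMat m (fun i => decide (i ∈ insert a s)) σ := by
        show Tswap m a * _ = _
        rw [Tswap_eq, gMat_mul, one_mul]
        have hfun : (fun i => xor (decide (i = a)) (decide ((1 : Equiv.Perm (Fin m))⁻¹ i ∈ s)))
            = fun i => decide (i ∈ insert a s) := by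
          funext i
          simp only [inv_one, Equiv.Perm.one_apply]
          by_cases hia : i = a
          · subst hia; simp [ha]
          · simp [hia, Finset.mem_insert]
        rw [hfun]
      exact Prod.ext h1 rfl
    rw [← heq]
    exact hmem

/-- The group of pairs `(T,P)` generated by the vertex-permutation
symmetries and the vertex-swapping symmetries of the Lauricella `F_C` matrix has
order at least `2^m · m!`. -/
theorem stmt12 (m : ℕ) :
    2 ^ m * Nat.factorial m ≤
      Nat.card (Submonoid.closure
        (Set.range (vertexPermPair m) ∪ Set.range (vertexSwapPair m))) := by
  classical
  set C := Submonoid.closure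
      (Set.range (vertexPermPair m) ∪ Set.range (vertexSwapPair m)) with hC
  have : Finite C := (closure_finite m).to_subtype
  have hεs : ∀ ε : Fin m → Bool, ∀ σ, ∃ P, (gMat m ε σ, P) ∈ C := by
    intro ε σ
    obtain ⟨P, hP⟩ := exists_pair_mem m (Finset.univ.filter (fun i => ε i)) σ
    refine ⟨P, ?_⟩
    have : (fun i => decide (i ∈ Finset.univ.filter (fun i => ε i))) = ε := by
      funext i; cases h : ε i <;> simp [h]
    rwa [this] at hP
  let f : (Fin m → Bool) × Equiv.Perm (Fin m) → C := fun p =>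
    ⟨(gMat m p.1 p.2, (hεs p.1 p.2).choose), (hεs p.1 p.2).choose_spec⟩
  have hf : Function.Injective f := by
    intro p q hpq
    have h1 : gMat m p.1 p.2 = gMat m q.1 q.2 :=
      congrArg Prod.fst (Subtype.ext_iff.mp hpq)
    obtain ⟨he, hs⟩ := gMat_injective m h1
    exact Prod.ext he hs
  calc 2 ^ m * Nat.factorial m
      = Nat.card ((Fin m → Bool) × Equiv.Perm (Fin m)) := by
        simp [Nat.card_eq_fintype_card, Fintype.card_perm, Fintype.card_fun]
    _ ≤ Nat.card C := Nat.card_le_card_of_injective f hf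
end

section
/- Euler's integral representation: for real c > b > 0 and |x| < 1, B(b, c−b) · ₂F₁(a,b;c;x) = ∫₀¹ z^{b−1} (1−z)^{c−b−1} (1−xz)^{−a} dz, where B is the Beta function. -/
/-- The real Gauss hypergeometric series. -/
noncomputable def gauss2F1Real (a b c x : ℝ) : ℝ :=
  ∑' n : ℕ,
    (ascPochhammer ℝ n).eval a * (ascPochhammer ℝ n).eval b /
      ((ascPochhammer ℝ n).eval c * (n.factorial : ℝ)) * x ^ n

/-- The Beta function `B(p,q) = ∫₀¹ t^{p−1} (1−t)^{q−1} dt`. -/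
noncomputable def betaFn (p q : ℝ) : ℝ :=
  ∫ t in (0 : ℝ)..1, t ^ (p - 1) * (1 - t) ^ (q - 1)

open Filter MeasureTheory intervalIntegral Real Set Topology

noncomputable def pochCoeff (a : ℝ) (n : ℕ) : ℝ := (ascPochhammer ℝ n).eval a / n.factorial

lemma pochCoeff_zero (a : ℝ) : pochCoeff a 0 = 1 := by
  simp [pochCoeff]

lemma pochCoeff_succ (a : ℝ) (n : ℕ) :
    pochCoeff a (n + 1) = pochCoeff a n * ((a + n) / (n + 1)) := by
  have h1 : ((n : ℝ) + 1) ≠ 0 := by positivity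
  have h2 : (n.factorial : ℝ) ≠ 0 := by exact_mod_cast n.factorial_ne_zero
  simp only [pochCoeff, ascPochhammer_succ_eval, Nat.factorial_succ]
  push_cast
  rw [div_mul_div_comm]
  ring_nf

lemma pochCoeff_nonneg {A : ℝ} (hA : 0 ≤ A) (n : ℕ) : 0 ≤ pochCoeff A n := by
  induction n with
  | zero => simp [pochCoeff_zero]
  | succ n ih =>
    rw [pochCoeff_succ]
    have : (0:ℝ) ≤ (A + n) / (n + 1) := by positivity
    exact mul_nonneg ih this

lemma abs_pochCoeff_le (a : ℝ) (n : ℕ) : |pochCoeff a n| ≤ pochCoeff |a| n := by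
  induction n with
  | zero => simp [pochCoeff_zero]
  | succ n ih =>
    rw [pochCoeff_succ, pochCoeff_succ, abs_mul]
    refine mul_le_mul ih ?_ (abs_nonneg _) (pochCoeff_nonneg (abs_nonneg a) n)
    rw [abs_div, abs_of_nonneg (by positivity : (0:ℝ) ≤ (n:ℝ) + 1)]
    refine div_le_div_of_nonneg_right ?_ (by positivity) |>.trans_eq rfl
    exact (abs_add_le a n).trans (by simp)

lemma tendsto_ratio (A : ℝ) : Tendsto (fun n : ℕ => (A + n) / (n + 1)) atTop (𝓝 1) := by
  have h : (fun n : ℕ => (A + n) / (n + 1)) = fun n : ℕ => (A - 1) * (1 / (n + 1)) + 1 := by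
    funext n
    have : ((n : ℝ) + 1) ≠ 0 := by positivity
    field_simp
    ring
  rw [h]
  have := (tendsto_one_div_add_atTop_nhds_zero_nat).const_mul (A - 1)
  simpa using this.add tendsto_const_nhds

lemma master {A q : ℝ} (hA : 0 ≤ A) (hq0 : 0 ≤ q) (hq1 : q < 1) :
    Summable (fun n : ℕ => pochCoeff A n * ((n + 1) * q ^ n)) := by
  set r : ℝ := (1 + q) / 2 with hr
  have hr1 : r < 1 := by rw [hr]; linarith
  have hqr : q < r := by rw [hr]; linarith
  have hratio : Tendsto (fun n : ℕ => (A + n) / (n + 1) * ((2 + n) / (n + 1)) * q) atTop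
      (𝓝 q) := by
    have := ((tendsto_ratio A).mul (tendsto_ratio 2)).mul_const q
    simpa using this
  have hev : ∀ᶠ n : ℕ in atTop, (A + n) / (n + 1) * ((2 + n) / (n + 1)) * q ≤ r :=
    hratio.eventually_le_const hqr
  refine summable_of_ratio_norm_eventually_le hr1 ?_
  filter_upwards [hev] with n hn
  have hfn : (0:ℝ) ≤ pochCoeff A n * ((n + 1) * q ^ n) :=
    mul_nonneg (pochCoeff_nonneg hA n) (by positivity)
  have key : pochCoeff A (n + 1) * ((n + 1 + 1) * q ^ (n + 1)) =
      ((A + n) / (n + 1) * ((2 + n) / (n + 1)) * q) * (pochCoeff A n * ((n + 1) * q ^ n)) := by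
    rw [pochCoeff_succ]
    have : ((n : ℝ) + 1) ≠ 0 := by positivity
    field_simp
    ring
  rw [Real.norm_eq_abs, Real.norm_eq_abs, abs_of_nonneg hfn]
  have hfn1 : (0:ℝ) ≤ pochCoeff A (n+1) * ((n + 1 + 1) * q ^ (n+1)) :=
    mul_nonneg (pochCoeff_nonneg hA _) (by positivity)
  rw [abs_of_nonneg (by push_cast at hfn1 ⊢; convert hfn1 using 2)]
  push_cast
  calc pochCoeff A (n + 1) * (((n:ℝ) + 1 + 1) * q ^ (n + 1))
      = ((A + n) / (n + 1) * ((2 + n) / (n + 1)) * q) * (pochCoeff A n * ((n + 1) * q ^ n)) := by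
        push_cast at key ⊢; exact key
    _ ≤ r * (pochCoeff A n * ((n + 1) * q ^ n)) := mul_le_mul_of_nonneg_right hn hfn

lemma binom_summable (a : ℝ) {t : ℝ} (ht : |t| < 1) :
    Summable (fun n : ℕ => pochCoeff a n * t ^ n) := by
  refine Summable.of_norm_bounded (master (abs_nonneg a) (abs_nonneg t) ht) fun n => ?_
  rw [Real.norm_eq_abs, abs_mul, abs_pow]
  calc |pochCoeff a n| * |t| ^ n ≤ pochCoeff |a| n * |t| ^ n :=
        mul_le_mul_of_nonneg_right (abs_pochCoeff_le a n) (by positivity)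
    _ ≤ pochCoeff |a| n * ((n + 1) * |t| ^ n) := by
        rw [mul_comm ((n:ℝ)+1)]
        refine mul_le_mul_of_nonneg_left ?_ (pochCoeff_nonneg (abs_nonneg a) n)
        nlinarith [pow_nonneg (abs_nonneg t) n, (Nat.cast_nonneg n : (0:ℝ) ≤ n)]

lemma binom_deriv (a : ℝ) {y : ℝ} (hy : |y| < 1) :
    HasDerivAt (fun z : ℝ => ∑' n : ℕ, pochCoeff a n * z ^ n)
      (∑' n : ℕ, pochCoeff a n * (n * y ^ (n - 1))) y := by
  set ρ : ℝ := (|y| + 1) / 2 with hρdef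
  have hρ0 : 0 < ρ := by positivity
  have hyρ : |y| < ρ := by rw [hρdef]; linarith
  have hρ1 : ρ < 1 := by rw [hρdef]; linarith
  have hu : Summable (fun n : ℕ => pochCoeff |a| n * ((n + 1) * ρ ^ n) / ρ) :=
    (master (abs_nonneg a) hρ0.le hρ1).div_const ρ
  refine hasDerivAt_tsum_of_isPreconnected (y₀ := 0) hu Metric.isOpen_ball
    (convex_ball (0:ℝ) ρ).isPreconnected
    (fun n z _ => ((hasDerivAt_pow n z).const_mul (pochCoeff a n))) ?_ ?_ ?_ ?_
  · intro n z hz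
    rw [Metric.mem_ball, Real.dist_eq, sub_zero] at hz
    rw [Real.norm_eq_abs, abs_mul, abs_mul, abs_pow]
    have h1 : |pochCoeff a n| ≤ pochCoeff |a| n := abs_pochCoeff_le a n
    have h2 : |z| ^ (n-1) ≤ ρ ^ (n-1) := pow_le_pow_left₀ (abs_nonneg z) hz.le _
    have h3 : (n:ℝ) * ρ ^ (n - 1) ≤ ((n:ℝ) + 1) * ρ ^ n / ρ := by
      rcases Nat.eq_zero_or_pos n with h | h
      · subst h; simp; positivity
      · obtain ⟨m, rfl⟩ := Nat.exists_eq_succ_of_ne_zero h.ne'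
        have he : ρ ^ (m + 1) / ρ = ρ ^ m := by
          rw [pow_succ, mul_div_assoc, div_self hρ0.ne', mul_one]
        simp only [Nat.succ_sub_one, Nat.succ_eq_add_one, mul_div_assoc, he]
        push_cast
        nlinarith [pow_nonneg hρ0.le m]
    calc |pochCoeff a n| * (|(n:ℝ)| * |z| ^ (n-1))
        ≤ pochCoeff |a| n * ((n:ℝ) * ρ ^ (n-1)) := by
          refine mul_le_mul h1 ?_ (by positivity) (pochCoeff_nonneg (abs_nonneg a) n)
          rw [abs_of_nonneg (Nat.cast_nonneg n : (0:ℝ) ≤ n)]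
          exact mul_le_mul_of_nonneg_left h2 (Nat.cast_nonneg n : (0:ℝ) ≤ n)
      _ ≤ pochCoeff |a| n * (((n:ℝ) + 1) * ρ ^ n / ρ) :=
          mul_le_mul_of_nonneg_left h3 (pochCoeff_nonneg (abs_nonneg a) n)
      _ = pochCoeff |a| n * ((n + 1) * ρ ^ n) / ρ := by ring
  · rw [Metric.mem_ball, Real.dist_eq]; simpa using hρ0
  · exact binom_summable a (by simp : |(0:ℝ)| < 1)
  · rw [Metric.mem_ball, Real.dist_eq, sub_zero]; exact hyρ

lemma binom_deriv_summable (a : ℝ) {y : ℝ} (hy : |y| < 1) :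
    Summable (fun n : ℕ => pochCoeff a n * ((n : ℝ) * y ^ (n - 1))) := by
  set ρ : ℝ := (|y| + 1) / 2 with hρdef
  have hρ0 : 0 < ρ := by positivity
  have hyρ : |y| < ρ := by rw [hρdef]; linarith
  have hρ1 : ρ < 1 := by rw [hρdef]; linarith
  have hu : Summable (fun n : ℕ => pochCoeff |a| n * ((n + 1) * ρ ^ n) / ρ) :=
    (master (abs_nonneg a) hρ0.le hρ1).div_const ρ
  refine Summable.of_norm_bounded hu fun n => ?_
  rw [Real.norm_eq_abs, abs_mul, abs_mul, abs_pow]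
  have h1 : |pochCoeff a n| ≤ pochCoeff |a| n := abs_pochCoeff_le a n
  have h2 : |y| ^ (n-1) ≤ ρ ^ (n-1) := pow_le_pow_left₀ (abs_nonneg y) hyρ.le _
  have h3 : (n:ℝ) * ρ ^ (n - 1) ≤ ((n:ℝ) + 1) * ρ ^ n / ρ := by
    rcases Nat.eq_zero_or_pos n with h | h
    · subst h; simp; positivity
    · obtain ⟨m, rfl⟩ := Nat.exists_eq_succ_of_ne_zero h.ne'
      have he : ρ ^ (m + 1) / ρ = ρ ^ m := by
        rw [pow_succ, mul_div_assoc, div_self hρ0.ne', mul_one]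
      simp only [Nat.succ_sub_one, Nat.succ_eq_add_one, mul_div_assoc, he]
      push_cast
      nlinarith [pow_nonneg hρ0.le m]
  calc |pochCoeff a n| * (|(n:ℝ)| * |y| ^ (n-1))
      ≤ pochCoeff |a| n * ((n:ℝ) * ρ ^ (n-1)) := by
        refine mul_le_mul h1 ?_ (by positivity) (pochCoeff_nonneg (abs_nonneg a) n)
        rw [abs_of_nonneg (Nat.cast_nonneg n : (0:ℝ) ≤ n)]
        exact mul_le_mul_of_nonneg_left h2 (Nat.cast_nonneg n : (0:ℝ) ≤ n)
    _ ≤ pochCoeff |a| n * (((n:ℝ) + 1) * ρ ^ n / ρ) :=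
        mul_le_mul_of_nonneg_left h3 (pochCoeff_nonneg (abs_nonneg a) n)
    _ = pochCoeff |a| n * ((n + 1) * ρ ^ n) / ρ := by ring

lemma binom_key (a : ℝ) {y : ℝ} (hy : |y| < 1) :
    (1 - y) * (∑' n : ℕ, pochCoeff a n * ((n : ℝ) * y ^ (n - 1))) =
      a * (∑' n : ℕ, pochCoeff a n * y ^ n) := by
  set D := ∑' n : ℕ, pochCoeff a n * ((n : ℝ) * y ^ (n - 1)) with hDdef
  set f := ∑' n : ℕ, pochCoeff a n * y ^ n with hfdef
  have hD : HasSum (fun n : ℕ => pochCoeff a n * ((n : ℝ) * y ^ (n - 1))) D :=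
    (binom_deriv_summable a hy).hasSum
  have hf : HasSum (fun n : ℕ => pochCoeff a n * y ^ n) f :=
    (binom_summable a hy).hasSum
  have hshift : HasSum (fun n : ℕ => pochCoeff a (n+1) * (((n:ℝ) + 1) * y ^ n)) (D - 0) := by
    have := (hasSum_nat_add_iff' (f := fun n : ℕ => pochCoeff a n * ((n : ℝ) * y ^ (n - 1)))
      1).mpr hD
    simp only [Finset.range_one, Finset.sum_singleton] at this
    convert this using 2 with n
    · rfl
    · push_cast; norm_num
    · simp
  rw [sub_zero] at hshift
  have hshift' : HasSum (fun n : ℕ => pochCoeff a n * (a + n) * y ^ n) D := by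
    refine hshift.congr_fun fun n => ?_
    rw [pochCoeff_succ]
    have : ((n : ℝ) + 1) ≠ 0 := by positivity
    field_simp
  have h2 : HasSum (fun n : ℕ => pochCoeff a n * (n : ℝ) * y ^ n) (y * D) := by
    refine (hD.mul_left y).congr_fun fun n => ?_
    rcases Nat.eq_zero_or_pos n with h | h
    · subst h; simp
    · obtain ⟨m, rfl⟩ := Nat.exists_eq_succ_of_ne_zero h.ne'
      simp only [Nat.succ_sub_one, Nat.succ_eq_add_one]
      ring
  have h3 : HasSum (fun n : ℕ => pochCoeff a n * (a + n) * y ^ n) (a * f + y * D) := by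
    refine ((hf.mul_left a).add h2).congr_fun fun n => ?_
    ring
  have : D = a * f + y * D := hshift'.unique h3
  linarith [this]

lemma hasSum_binom (a : ℝ) {t : ℝ} (ht : |t| < 1) :
    HasSum (fun n : ℕ => pochCoeff a n * t ^ n) ((1 - t) ^ (-a)) := by
  set f : ℝ → ℝ := fun z => ∑' n : ℕ, pochCoeff a n * z ^ n with hfdef
  have hgz : ∀ y ∈ Set.uIcc (0:ℝ) t, HasDerivAt (fun z => (1 - z) ^ a * f z) ((fun _ => (0:ℝ)) y) y := by
    intro y hy
    have hyabs : |y| < 1 := by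
      have : |y| ≤ |t| := by
        rcases Set.mem_uIcc.mp hy with ⟨h1, h2⟩ | ⟨h1, h2⟩
        · rw [abs_of_nonneg h1]; exact h2.trans (le_abs_self t)
        · rw [abs_of_nonpos h2]; exact (neg_le_abs t).trans' (by linarith)
      exact this.trans_lt ht
    have h1y : (0:ℝ) < 1 - y := by
      have := abs_lt.mp hyabs
      linarith [this.2]
    have hpow : HasDerivAt (fun z : ℝ => (1 - z) ^ a) (-1 * a * (1 - y) ^ (a - 1)) y := by
      have hinner : HasDerivAt (fun z : ℝ => 1 - z) (-1) y := by
        simpa using (hasDerivAt_id y).const_sub 1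
      exact hinner.rpow_const (Or.inl h1y.ne')
    have hD := binom_deriv a hyabs
    have hcomb := hpow.mul hD
    convert hcomb using 1
    · rfl
    · rfl
    · rfl
    have hkey := binom_key a hyabs
    set D := ∑' n : ℕ, pochCoeff a n * ((n:ℝ) * y ^ (n - 1)) with hD2
    set F := ∑' n : ℕ, pochCoeff a n * y ^ n with hF2
    have e1 : (1 - y) ^ a = (1 - y) ^ (a - 1) * (1 - y) := by
      rw [← Real.rpow_add_one h1y.ne' (a - 1)]
      norm_num
    rw [e1]
    linear_combination (-((1 - y) ^ (a - 1))) * hkey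
  have hint : (0:ℝ) = (1 - t) ^ a * f t - (1 - 0) ^ a * f 0 := by
    have := intervalIntegral.integral_eq_sub_of_hasDerivAt hgz
      (_root_.intervalIntegrable_const (c := (0:ℝ)))
    simpa using this
  have hf0 : f 0 = 1 := by
    have hrfl : f 0 = ∑' n : ℕ, pochCoeff a n * (0:ℝ) ^ n := rfl
    rw [hrfl, tsum_eq_single 0 (fun n hn => by simp [zero_pow hn])]
    simp [pochCoeff_zero]
  rw [hf0] at hint
  have h1t : (0:ℝ) < 1 - t := by
    have := abs_lt.mp ht
    linarith [this.2]
  have hft : f t = (1 - t) ^ (-a) := by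
    rw [Real.rpow_neg h1t.le]
    have hpos : (0:ℝ) < (1 - t) ^ a := Real.rpow_pos_of_pos h1t a
    have : (1 - t) ^ a * f t = 1 := by
      simp only [sub_zero, Real.one_rpow, mul_one] at hint
      linarith
    field_simp at this ⊢
    linarith [this]
  have := (binom_summable a ht).hasSum
  rwa [show ∑' n : ℕ, pochCoeff a n * t ^ n = f t from rfl, hft] at this

lemma beta_cast {p q x : ℝ} (hx0 : 0 ≤ x) (hx1 : x ≤ 1) :
    (x : ℂ) ^ ((p : ℂ) - 1) * (1 - (x : ℂ)) ^ ((q : ℂ) - 1) =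
      ((x ^ (p - 1) * (1 - x) ^ (q - 1) : ℝ) : ℂ) := by
  have h1 : ((p : ℂ) - 1) = ((p - 1 : ℝ) : ℂ) := by push_cast; ring
  have h2 : ((q : ℂ) - 1) = ((q - 1 : ℝ) : ℂ) := by push_cast; ring
  have h3 : (1 - (x : ℂ)) = ((1 - x : ℝ) : ℂ) := by push_cast; ring
  rw [h1, h2, h3, ← Complex.ofReal_cpow hx0, ← Complex.ofReal_cpow (by linarith), ← Complex.ofReal_mul]

lemma betaIntegrand_integrable {p q : ℝ} (hp : 0 < p) (hq : 0 < q) :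
    IntervalIntegrable (fun z : ℝ => z ^ (p - 1) * (1 - z) ^ (q - 1)) volume 0 1 := by
  have hC := Complex.betaIntegral_convergent (u := (p : ℂ)) (v := (q : ℂ))
    (by simpa using hp) (by simpa using hq)
  rw [intervalIntegrable_iff_integrableOn_Ioc_of_le zero_le_one] at hC ⊢
  have hC' : IntegrableOn (fun x : ℝ => ((x ^ (p - 1) * (1 - x) ^ (q - 1) : ℝ) : ℂ))
      (Ioc (0:ℝ) 1) volume := by
    refine hC.congr_fun (fun x hx => ?_) measurableSet_Ioc
    exact beta_cast hx.1.le hx.2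
  exact hC'.re.congr (Filter.EventuallyEq.of_eq (funext fun x => by simp))

lemma betaFn_eq_Gamma {p q : ℝ} (hp : 0 < p) (hq : 0 < q) :
    betaFn p q = Real.Gamma p * Real.Gamma q / Real.Gamma (p + q) := by
  have h := Complex.Gamma_mul_Gamma_eq_betaIntegral (s := (p:ℂ)) (t := (q:ℂ))
    (by simpa using hp) (by simpa using hq)
  have hbeta : Complex.betaIntegral p q = ((betaFn p q : ℝ) : ℂ) := by
    rw [Complex.betaIntegral, betaFn, ← intervalIntegral.integral_ofReal]
    refine intervalIntegral.integral_congr fun x hx => ?_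
    rw [Set.uIcc_of_le zero_le_one] at hx
    exact beta_cast hx.1 hx.2
  rw [hbeta, show ((p:ℂ) + q) = ((p + q : ℝ) : ℂ) by push_cast; ring, Complex.Gamma_ofReal,
    Complex.Gamma_ofReal, Complex.Gamma_ofReal] at h
  have h' : Real.Gamma p * Real.Gamma q = Real.Gamma (p + q) * betaFn p q := by
    exact_mod_cast h
  have hpos : 0 < Real.Gamma (p + q) := Real.Gamma_pos_of_pos (by positivity)
  field_simp
  linarith [h']

lemma Gamma_poch {b : ℝ} (hb : 0 < b) (n : ℕ) :
    Real.Gamma (b + n) = (ascPochhammer ℝ n).eval b * Real.Gamma b := by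
  induction n with
  | zero => simp
  | succ n ih =>
    have hbn : b + (n:ℝ) ≠ 0 := by positivity
    have e : (b : ℝ) + ((n : ℕ) + 1 : ℕ) = (b + n) + 1 := by push_cast; ring
    rw [e, Real.Gamma_add_one hbn, ih, ascPochhammer_succ_eval]
    ring

lemma poch_le_poch {x y : ℝ} (hx : 0 < x) (hxy : x ≤ y) (n : ℕ) :
    (ascPochhammer ℝ n).eval x ≤ (ascPochhammer ℝ n).eval y := by
  induction n with
  | zero => simp
  | succ n ih =>
    rw [ascPochhammer_succ_eval, ascPochhammer_succ_eval]
    have h1 : 0 < (ascPochhammer ℝ n).eval x := ascPochhammer_pos n x hx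
    have h2 : (0:ℝ) ≤ x + n := by positivity
    nlinarith

lemma betaFn_ratio {b c : ℝ} (hb : 0 < b) (hcb : b < c) (n : ℕ) :
    betaFn (b + n) (c - b) =
      (ascPochhammer ℝ n).eval b / (ascPochhammer ℝ n).eval c * betaFn b (c - b) := by
  have hc : 0 < c := hb.trans hcb
  have h1 : (0:ℝ) < b + n := by positivity
  have h2 : (0:ℝ) < c - b := by linarith
  rw [betaFn_eq_Gamma h1 h2, betaFn_eq_Gamma hb h2]
  have e : b + (n:ℝ) + (c - b) = c + n := by ring
  rw [e, show b + (c - b) = c by ring, Gamma_poch hb n, Gamma_poch hc n]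
  have g1 : (0:ℝ) < Real.Gamma c := Real.Gamma_pos_of_pos hc
  have g2 : (0:ℝ) < (ascPochhammer ℝ n).eval c := ascPochhammer_pos n c hc
  field_simp

lemma betaFn_pos {p q : ℝ} (hp : 0 < p) (hq : 0 < q) : 0 < betaFn p q := by
  rw [betaFn_eq_Gamma hp hq]
  have := Real.Gamma_pos_of_pos hp
  have := Real.Gamma_pos_of_pos hq
  have := Real.Gamma_pos_of_pos (by positivity : 0 < p + q)
  positivity

lemma betaFn_mono {b c : ℝ} (hb : 0 < b) (hcb : b < c) (n : ℕ) :
    betaFn (b + n) (c - b) ≤ betaFn b (c - b) := by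
  have hc : 0 < c := hb.trans hcb
  rw [betaFn_ratio hb hcb n]
  have g2 : (0:ℝ) < (ascPochhammer ℝ n).eval c := ascPochhammer_pos n c hc
  have hle : (ascPochhammer ℝ n).eval b ≤ (ascPochhammer ℝ n).eval c :=
    poch_le_poch hb hcb.le n
  have hB := betaFn_pos hb (by linarith : (0:ℝ) < c - b)
  have : (ascPochhammer ℝ n).eval b / (ascPochhammer ℝ n).eval c ≤ 1 :=
    (div_le_one g2).mpr hle
  nlinarith

lemma abs_term_le (a t : ℝ) (n : ℕ) :
    |pochCoeff a n * t ^ n| ≤ pochCoeff |a| n * ((n + 1) * |t| ^ n) := by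
  rw [abs_mul, abs_pow]
  calc |pochCoeff a n| * |t| ^ n ≤ pochCoeff |a| n * |t| ^ n :=
        mul_le_mul_of_nonneg_right (abs_pochCoeff_le a n) (by positivity)
    _ ≤ pochCoeff |a| n * ((n + 1) * |t| ^ n) := by
        rw [mul_comm ((n:ℝ)+1)]
        refine mul_le_mul_of_nonneg_left ?_ (pochCoeff_nonneg (abs_nonneg a) n)
        nlinarith [pow_nonneg (abs_nonneg t) n, (Nat.cast_nonneg n : (0:ℝ) ≤ n)]

/-- Euler's integral representation: for real `c > b > 0` and
`|x| < 1`,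
`B(b, c−b) ₂F₁(a,b;c;x) = ∫₀¹ z^{b−1} (1−z)^{c−b−1} (1−xz)^{−a} dz`. -/
theorem stmt16 (a b c x : ℝ) (hb : 0 < b) (hcb : b < c) (hx : |x| < 1) :
    betaFn b (c - b) * gauss2F1Real a b c x =
      ∫ z in (0 : ℝ)..1, z ^ (b - 1) * (1 - z) ^ (c - b - 1) * (1 - x * z) ^ (-a) := by
  have hc : 0 < c := hb.trans hcb
  have hq : 0 < c - b := by linarith
  set μ := volume.restrict (Set.Ioc (0:ℝ) 1) with hμ
  set F : ℕ → ℝ → ℝ := fun n z =>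
    pochCoeff a n * x ^ n * (z ^ (b + (n:ℝ) - 1) * (1 - z) ^ (c - b - 1)) with hF
  have hbeta_int : ∀ n : ℕ, ∫ z in Set.Ioc (0:ℝ) 1, z ^ (b + (n:ℝ) - 1) * (1 - z) ^ (c - b - 1) =
      betaFn (b + n) (c - b) := by
    intro n
    rw [betaFn, intervalIntegral.integral_of_le zero_le_one]
  have hFint : ∀ n : ℕ, Integrable (F n) μ := by
    intro n
    have h1 := betaIntegrand_integrable (p := b + n) (q := c - b) (by positivity) hq
    rw [intervalIntegrable_iff_integrableOn_Ioc_of_le zero_le_one] at h1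
    exact (h1.const_mul (pochCoeff a n * x ^ n))
  have hnorm : ∀ n : ℕ, ∫ z, ‖F n z‖ ∂μ =
      |pochCoeff a n * x ^ n| * betaFn (b + n) (c - b) := by
    intro n
    rw [hμ, show (fun z => ‖F n z‖) = fun z => ‖F n z‖ from rfl]
    rw [setIntegral_congr_fun (measurableSet_Ioc) (g := fun z =>
      |pochCoeff a n * x ^ n| * (z ^ (b + (n:ℝ) - 1) * (1 - z) ^ (c - b - 1)))
      (fun z hz => by
        rw [hF, Real.norm_eq_abs]
        simp only
        rw [abs_mul]
        congr 1
        exact abs_of_nonneg (mul_nonneg (Real.rpow_nonneg hz.1.le _)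
          (Real.rpow_nonneg (by linarith [hz.2] : (0:ℝ) ≤ 1 - z) _)))]
    rw [MeasureTheory.integral_const_mul, hbeta_int n]
  have hsum : Summable (fun n : ℕ => ∫ z, ‖F n z‖ ∂μ) := by
    refine Summable.of_nonneg_of_le (fun n => integral_nonneg fun z => norm_nonneg _)
      (fun n => ?_) ((master (abs_nonneg a) (abs_nonneg x) hx).mul_right (betaFn b (c - b)))
    rw [hnorm n]
    calc |pochCoeff a n * x ^ n| * betaFn (b + n) (c - b)
        ≤ |pochCoeff a n * x ^ n| * betaFn b (c - b) :=
          mul_le_mul_of_nonneg_left (betaFn_mono hb hcb n) (abs_nonneg _)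
      _ ≤ pochCoeff |a| n * ((n + 1) * |x| ^ n) * betaFn b (c - b) :=
          mul_le_mul_of_nonneg_right (abs_term_le a x n) (betaFn_pos hb hq).le
  have hswap := MeasureTheory.integral_tsum_of_summable_integral_norm hFint hsum
  have hInt : ∀ n : ℕ, ∫ z, F n z ∂μ = pochCoeff a n * x ^ n * betaFn (b + n) (c - b) := by
    intro n
    rw [hμ, hF]
    simp only
    rw [MeasureTheory.integral_const_mul, hbeta_int n]
  have hL : ∑' n : ℕ, ∫ z, F n z ∂μ = betaFn b (c - b) * gauss2F1Real a b c x := by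
    rw [gauss2F1Real, ← tsum_mul_left]
    refine tsum_congr fun n => ?_
    rw [hInt n, betaFn_ratio hb hcb n, pochCoeff]
    have h1 : (ascPochhammer ℝ n).eval c ≠ 0 := (ascPochhammer_pos n c hc).ne'
    have h2 : (n.factorial : ℝ) ≠ 0 := by exact_mod_cast n.factorial_ne_zero
    field_simp
  have hR : ∫ z, (∑' n : ℕ, F n z) ∂μ =
      ∫ z in (0:ℝ)..1, z ^ (b - 1) * (1 - z) ^ (c - b - 1) * (1 - x * z) ^ (-a) := by
    rw [intervalIntegral.integral_of_le zero_le_one, hμ]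
    refine setIntegral_congr_fun measurableSet_Ioc fun z hz => ?_
    have hz0 : 0 < z := hz.1
    have hz1 : z ≤ 1 := hz.2
    have hxz : |x * z| < 1 := by
      rw [abs_mul]
      calc |x| * |z| ≤ |x| * 1 := by
            refine mul_le_mul_of_nonneg_left ?_ (abs_nonneg x)
            rw [abs_of_pos hz0]; exact hz1
        _ < 1 := by simpa using hx
    have hs := (hasSum_binom a hxz).mul_left (z ^ (b - 1) * (1 - z) ^ (c - b - 1))
    have heq : (fun n : ℕ => z ^ (b - 1) * (1 - z) ^ (c - b - 1) *
        (pochCoeff a n * (x * z) ^ n)) = fun n => F n z := by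
      funext n
      rw [hF]
      simp only
      rw [show b + (n:ℝ) - 1 = (b - 1) + (n:ℝ) by ring, Real.rpow_add hz0,
        Real.rpow_natCast, mul_pow]
      ring
    rw [heq] at hs
    rw [hs.tsum_eq]
  rw [← hL, hswap, hR]
end
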